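/- Let v ∈ V be nonzero and define the operator E_v on L²(L(V,W)) by E_v(f) = E_{V'}[e_{V/V'} f], the average over uniformly random codimension-one subspaces V' ≤ V not containing v. Then E_v(f) = Σ_{X ∈ L(W,V) : v ∉ im(X)} q^{-rank(X)} f̂(X) u_X. -/

import Mathlib

set_option linter.unusedSectionVars false
set_option maxHeartbeats 1000000

open scoped ComplexConjugate Classical
open LinearMap

variable {F V W : Type} [Field F] [Fintype F]
  [AddCommGroup V] [Module F V] [Fintype V]
  [AddCommGroup W] [Module F W] [Fintype W]

/-- The character `u_X(A) = φ(tr(X ∘ A))` of the bilinear scheme `L(V,W)`. -/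
noncomputable def uChar (φ : AddChar F ℂ) (X : W →ₗ[F] V) (A : V →ₗ[F] W) : ℂ :=
  φ (LinearMap.trace F V (X ∘ₗ A))

/-- Fourier coefficient `f̂(X) = ⟨f, u_X⟩`. -/
noncomputable def fHat [Fintype (V →ₗ[F] W)] (φ : AddChar F ℂ)
    (f : (V →ₗ[F] W) → ℂ) (X : W →ₗ[F] V) : ℂ :=
  (∑ A : V →ₗ[F] W, f A * conj (uChar φ X A)) / (Fintype.card (V →ₗ[F] W) : ℂ)

/-- The averaging operator `e_{V/V'}` on `L²(L(V,W))`. -/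
noncomputable def eAvg [Fintype (V →ₗ[F] W)] (V' : Submodule F V)
    (f : (V →ₗ[F] W) → ℂ) (A : V →ₗ[F] W) : ℂ :=
  (∑ B ∈ Finset.univ.filter (fun B : V →ₗ[F] W => ∀ v ∈ V', B v = 0), f (A + B)) /
    ((Finset.univ.filter (fun B : V →ₗ[F] W => ∀ v ∈ V', B v = 0)).card : ℂ)

noncomputable instance : Fintype (V →ₗ[F] F) :=
  have : Finite (V →ₗ[F] F) := Finite.of_injective _ DFunLike.coe_injective
  Fintype.ofFinite _

lemma sum_addChar_eq_zero {G : Type} [AddCommGroup G] [Fintype G] (φ : AddChar F ℂ)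
    (ψ : G →+ F) (h : ∃ g, φ (ψ g) ≠ 1) : ∑ g, φ (ψ g) = 0 := by
  obtain ⟨g0, hg0⟩ := h
  have key : ∑ g, φ (ψ (g + g0)) = ∑ g, φ (ψ g) :=
    Fintype.sum_equiv (Equiv.addRight g0) _ _ (fun g => rfl)
  have step : ∑ g, φ (ψ (g + g0)) = (∑ g, φ (ψ g)) * φ (ψ g0) := by
    rw [Finset.sum_mul]
    refine Finset.sum_congr rfl fun g _ => ?_
    rw [map_add, AddChar.map_add_eq_mul]
  have h2 : (∑ g, φ (ψ g)) * (φ (ψ g0) - 1) = 0 := by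
    rw [mul_sub, mul_one, ← step, key, sub_self]
  rcases mul_eq_zero.mp h2 with h3 | h3
  · exact h3
  · exact absurd (by linear_combination h3) hg0

lemma trace_smulRight_eq (ℓ : V →ₗ[F] F) (u : V) : trace F V (ℓ.smulRight u) = ℓ u := by
  have h := LinearMap.trace_eq_contract_apply F V (ℓ ⊗ₜ[F] u)
  rw [contractLeft_apply] at h
  rw [← h]; congr 1

lemma exists_char_ne_one (φ : AddChar F ℂ) (hφ : φ ≠ 1) (C : V →ₗ[F] W) (hC : C ≠ 0) :
    ∃ X : W →ₗ[F] V, φ (trace F V (X ∘ₗ C)) ≠ 1 := by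
  obtain ⟨u, hu⟩ : ∃ u, C u ≠ 0 := by
    by_contra h; push_neg at h; exact hC (by ext x; simp [h])
  obtain ⟨g, hg⟩ : ∃ g : Module.Dual F W, g (C u) ≠ 0 := by
    by_contra h; push_neg at h
    exact hu ((Module.forall_dual_apply_eq_zero_iff F (C u)).mp h)
  obtain ⟨t, ht⟩ := AddChar.ne_one_iff.mp hφ
  refine ⟨((t / g (C u)) • g).smulRight u, ?_⟩
  have hcomp : (((t / g (C u)) • g).smulRight u) ∘ₗ C
      = ((t / g (C u)) • (g ∘ₗ C)).smulRight u := by ext x; simp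
  rw [hcomp, trace_smulRight_eq]
  have hval : ((t / g (C u)) • (g ∘ₗ C)) u = t := by
    simp only [LinearMap.smul_apply, LinearMap.comp_apply, smul_eq_mul]
    field_simp
  rw [hval]; exact ht

lemma sum_char_trace [Fintype (W →ₗ[F] V)] (φ : AddChar F ℂ) (hφ : φ ≠ 1)
    (C : V →ₗ[F] W) (hC : C ≠ 0) :
    ∑ X : W →ₗ[F] V, φ (trace F V (X ∘ₗ C)) = 0 :=
  sum_addChar_eq_zero φ
    (AddMonoidHom.mk' (fun X => trace F V (X ∘ₗ C))
      (fun a b => by simp only [LinearMap.add_comp, map_add]))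
    (exists_char_ne_one φ hφ C hC)

lemma card_hom_eq [Fintype (V →ₗ[F] W)] [Fintype (W →ₗ[F] V)] :
    Fintype.card (V →ₗ[F] W) = Fintype.card (W →ₗ[F] V) := by
  have h1 : Fintype.card (V →ₗ[F] W)
      = Fintype.card F ^ (Module.finrank F V * Module.finrank F W) := by
    rw [Module.card_eq_pow_finrank (K := F), Module.finrank_linearMap]
  have h2 : Fintype.card (W →ₗ[F] V)
      = Fintype.card F ^ (Module.finrank F W * Module.finrank F V) := by
    rw [Module.card_eq_pow_finrank (K := F), Module.finrank_linearMap]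
  rw [h1, h2, Nat.mul_comm]

lemma fourier_inv [Fintype (V →ₗ[F] W)] [Fintype (W →ₗ[F] V)] (φ : AddChar F ℂ) (hφ : φ ≠ 1)
    (f : (V →ₗ[F] W) → ℂ) (A : V →ₗ[F] W) :
    ∑ X : W →ₗ[F] V, fHat φ f X * uChar φ X A = f A := by
  have hL : (Fintype.card (V →ₗ[F] W) : ℂ) ≠ 0 := Nat.cast_ne_zero.mpr Fintype.card_ne_zero
  have key : ∀ X : W →ₗ[F] V, fHat φ f X * uChar φ X A =
      (∑ A' : V →ₗ[F] W, f A' * φ (trace F V (X ∘ₗ (A - A'))))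
        / (Fintype.card (V →ₗ[F] W) : ℂ) := by
    intro X
    rw [fHat, div_mul_eq_mul_div, Finset.sum_mul]
    congr 1
    refine Finset.sum_congr rfl fun A' _ => ?_
    rw [uChar, uChar, ← AddChar.map_neg_eq_conj, mul_assoc, ← AddChar.map_add_eq_mul]
    congr 2
    rw [LinearMap.comp_sub, map_sub]
    ring
  calc ∑ X : W →ₗ[F] V, fHat φ f X * uChar φ X A
      = ∑ X : W →ₗ[F] V, (∑ A' : V →ₗ[F] W, f A' * φ (trace F V (X ∘ₗ (A - A')))) /
          (Fintype.card (V →ₗ[F] W) : ℂ) := Finset.sum_congr rfl fun X _ => key X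
    _ = (∑ A' : V →ₗ[F] W, f A' * ∑ X : W →ₗ[F] V, φ (trace F V (X ∘ₗ (A - A')))) /
          (Fintype.card (V →ₗ[F] W) : ℂ) := by
        rw [← Finset.sum_div]
        congr 1
        rw [Finset.sum_comm]
        exact Finset.sum_congr rfl fun A' _ => (Finset.mul_sum _ _ _).symm
    _ = f A := by
        have inner : ∀ A' : V →ₗ[F] W, (∑ X : W →ₗ[F] V, φ (trace F V (X ∘ₗ (A - A')))) =
            if A' = A then (Fintype.card (V →ₗ[F] W) : ℂ) else 0 := by
          intro A'
          by_cases h : A' = A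
          · subst h
            simp only [sub_self, if_true]
            rw [card_hom_eq (F := F) (V := V) (W := W)]
            simp [LinearMap.comp_zero]
          · rw [if_neg h]
            exact sum_char_trace φ hφ _ (sub_ne_zero.mpr (Ne.symm h))
        rw [Finset.sum_congr rfl fun A' _ => by rw [inner A']]
        simp only [mul_ite, mul_zero]
        rw [Finset.sum_ite_eq' Finset.univ A (fun A' => f A' * (Fintype.card (V →ₗ[F] W) : ℂ))]
        rw [if_pos (Finset.mem_univ A), mul_div_assoc, div_self hL, mul_one]

lemma ker_hyperplane {ℓ : V →ₗ[F] F} {v : V} (hℓ : ℓ v = 1) :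
    Module.finrank F (ker ℓ) + 1 = Module.finrank F V ∧ v ∉ ker ℓ := by
  constructor
  · have hsurj : Function.Surjective ℓ := fun c => ⟨c • v, by simp [hℓ]⟩
    have h := finrank_range_add_finrank_ker ℓ
    rw [LinearMap.range_eq_top.mpr hsurj, finrank_top, Module.finrank_self] at h
    omega
  · intro h; rw [LinearMap.mem_ker, hℓ] at h; exact one_ne_zero h

lemma exists_functional (R : Submodule F V) (v : V) (hvR : v ∉ R) :
    ∃ ℓ : V →ₗ[F] F, ℓ v = 1 ∧ R ≤ ker ℓ := by
  have hv0 : R.mkQ v ≠ 0 := by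
    simpa [Submodule.mkQ_apply, Submodule.Quotient.mk_eq_zero] using hvR
  obtain ⟨g, hg⟩ : ∃ g : Module.Dual F (V ⧸ R), g (R.mkQ v) ≠ 0 := by
    by_contra h; push_neg at h
    exact hv0 ((Module.forall_dual_apply_eq_zero_iff F _).mp h)
  refine ⟨(g (R.mkQ v))⁻¹ • (g ∘ₗ R.mkQ),
    by simp; exact inv_mul_cancel₀ (by simpa using hg), fun x hx => ?_⟩
  simp [LinearMap.mem_ker, Submodule.mkQ_apply, (Submodule.Quotient.mk_eq_zero R).mpr hx]

lemma finrank_sup_span {R : Submodule F V} {v : V} (hv : v ≠ 0) (hvR : v ∉ R) :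
    Module.finrank F ↥(R ⊔ Submodule.span F {v}) = Module.finrank F R + 1 := by
  have hdisj : R ⊓ Submodule.span F {v} = ⊥ := by
    rw [Submodule.eq_bot_iff]
    rintro x ⟨hx1, hx2⟩
    obtain ⟨c, rfl⟩ := Submodule.mem_span_singleton.mp hx2
    rcases eq_or_ne c 0 with rfl | hc
    · simp
    · have : v ∈ R := by
        have h2 := R.smul_mem c⁻¹ hx1
        rwa [smul_smul, inv_mul_cancel₀ hc, one_smul] at h2
      exact absurd this hvR
  have h := Submodule.finrank_sup_add_finrank_inf_eq R (Submodule.span F {v})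
  rw [hdisj, finrank_bot, finrank_span_singleton hv] at h
  omega

lemma sup_span_eq_top {V' : Submodule F V} {v : V} (hv : v ≠ 0)
    (hdim : Module.finrank F V' + 1 = Module.finrank F V) (hv' : v ∉ V') :
    V' ⊔ Submodule.span F {v} = ⊤ := by
  apply Submodule.eq_top_of_finrank_eq
  rw [finrank_sup_span hv hv', hdim]

lemma exists_unique_functional {V' : Submodule F V} {v : V} (hv : v ≠ 0)
    (hdim : Module.finrank F V' + 1 = Module.finrank F V) (hv' : v ∉ V') :
    ∃! ℓ : V →ₗ[F] F, ℓ v = 1 ∧ ker ℓ = V' := by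
  obtain ⟨ℓ, hℓv, hℓker⟩ := exists_functional V' v hv'
  have ⟨hdim', _⟩ := ker_hyperplane hℓv
  have hker : ker ℓ = V' :=
    (Submodule.eq_of_le_of_finrank_eq hℓker (by omega)).symm
  refine ⟨ℓ, ⟨hℓv, hker⟩, ?_⟩
  rintro ℓ₂ ⟨hℓ₂v, hℓ₂ker⟩
  ext x
  have hx : x ∈ V' ⊔ Submodule.span F {v} := by
    rw [sup_span_eq_top hv hdim hv']; trivial
  obtain ⟨a, ha, b, hb, rfl⟩ := Submodule.mem_sup.mp hx
  obtain ⟨c, rfl⟩ := Submodule.mem_span_singleton.mp hb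
  have h2a : ℓ₂ a = 0 := by rw [← LinearMap.mem_ker, hℓ₂ker]; exact ha
  have h1a : ℓ a = 0 := by rw [← LinearMap.mem_ker, hker]; exact ha
  simp [h2a, h1a, hℓ₂v, hℓv]

lemma counting (v : V) (hv : v ≠ 0) (R : Submodule F V) (hvR : v ∉ R) :
    (Finset.univ.filter (fun ℓ : V →ₗ[F] F => ℓ v = 1 ∧ R ≤ ker ℓ)).card
      = Fintype.card F ^ (Module.finrank F V - 1 - Module.finrank F R) := by
  obtain ⟨ℓ0, hℓ0v, hℓ0R⟩ := exists_functional R v hvR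
  set S := R ⊔ Submodule.span F {v} with hS
  have hvS : v ∈ S := Submodule.mem_sup_right (Submodule.mem_span_singleton_self v)
  have hRS : R ≤ S := le_sup_left
  have hrankS : Module.finrank F S = Module.finrank F R + 1 := finrank_sup_span hv hvR
  have hRlt : Module.finrank F R < Module.finrank F V := by
    apply Submodule.finrank_lt
    intro h; rw [h] at hvR; exact hvR trivial
  -- card of the annihilator
  have hann : Fintype.card S.dualAnnihilator
      = Fintype.card F ^ (Module.finrank F V - 1 - Module.finrank F R) := by
    rw [Module.card_eq_pow_finrank (K := F)]
    congr 1
    have e := (Subspace.quotEquivAnnihilator S).symm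
    have h1 : Module.finrank F S.dualAnnihilator = Module.finrank F (V ⧸ S) :=
      LinearEquiv.finrank_eq e
    have h2 := Submodule.finrank_quotient_add_finrank S
    omega
  have himem : ∀ ℓ ∈ Finset.univ.filter (fun ℓ : V →ₗ[F] F => ℓ v = 1 ∧ R ≤ ker ℓ),
      ℓ - ℓ0 ∈ S.dualAnnihilator := by
    intro ℓ hℓ
    simp only [Finset.mem_filter, Finset.mem_univ, true_and] at hℓ
    rw [Submodule.mem_dualAnnihilator]
    intro w hw
    obtain ⟨a, ha, b, hb, rfl⟩ := Submodule.mem_sup.mp hw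
    obtain ⟨c, rfl⟩ := Submodule.mem_span_singleton.mp hb
    have h1 : ℓ0 a = 0 := hℓ0R ha
    have h2 : ℓ a = 0 := hℓ.2 ha
    simp [h1, h2, hℓ.1, hℓ0v]
  rw [← hann, ← Finset.card_univ]
  refine Finset.card_bij' (fun ℓ hℓ => (⟨ℓ - ℓ0, himem ℓ hℓ⟩ : S.dualAnnihilator))
    (fun e _ => e.1 + ℓ0) (fun _ _ => Finset.mem_univ _) ?_ ?_ ?_
  · intro e _
    simp only [Finset.mem_filter, Finset.mem_univ, true_and]
    have he := (Submodule.mem_dualAnnihilator e.1).mp e.2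
    constructor
    · rw [LinearMap.add_apply, he v hvS, hℓ0v, zero_add]
    · intro r hr
      rw [LinearMap.mem_ker, LinearMap.add_apply, he r (hRS hr), hℓ0R hr, add_zero]
  · intro ℓ hℓ
    simp [sub_add_cancel]
  · intro e he
    exact Subtype.ext (by simp)

lemma eAvg_ker_eq [Fintype (V →ₗ[F] W)] [Fintype (W →ₗ[F] V)] (φ : AddChar F ℂ) (hφ : φ ≠ 1)
    (f : (V →ₗ[F] W) → ℂ) (A : V →ₗ[F] W) {ℓ : V →ₗ[F] F} {v : V} (hℓ : ℓ v = 1) :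
    eAvg (ker ℓ) f A = ∑ X ∈ Finset.univ.filter (fun X : W →ₗ[F] V => range X ≤ ker ℓ),
      fHat φ f X * uChar φ X A := by
  have hW : ((Fintype.card W : ℂ)) ≠ 0 := Nat.cast_ne_zero.mpr Fintype.card_ne_zero
  have hform : ∀ B : V →ₗ[F] W, (∀ x ∈ ker ℓ, B x = 0) → B = ℓ.smulRight (B v) := by
    intro B hB
    ext x
    have hx : x - ℓ x • v ∈ ker ℓ := by
      rw [LinearMap.mem_ker, map_sub, map_smul, hℓ, smul_eq_mul, mul_one, sub_self]
    have := hB _ hx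
    rw [map_sub, map_smul, sub_eq_zero] at this
    simpa using this
  have hmem : ∀ w : W, (ℓ.smulRight w) ∈
      Finset.univ.filter (fun B : V →ₗ[F] W => ∀ x ∈ ker ℓ, B x = 0) := by
    intro w
    simp only [Finset.mem_filter, Finset.mem_univ, true_and]
    intro x hx
    rw [LinearMap.smulRight_apply, LinearMap.mem_ker.mp hx, zero_smul]
  have hsum : ∀ g : (V →ₗ[F] W) → ℂ,
      ∑ B ∈ Finset.univ.filter (fun B : V →ₗ[F] W => ∀ x ∈ ker ℓ, B x = 0), g B
        = ∑ w : W, g (ℓ.smulRight w) := by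
    intro g
    refine Finset.sum_nbij' (fun B => B v) (fun w => ℓ.smulRight w)
      (fun B _ => Finset.mem_univ _) (fun w _ => hmem w) ?_ ?_ ?_
    · intro B hB
      simp only [Finset.mem_filter, Finset.mem_univ, true_and] at hB
      exact (hform B hB).symm
    · intro w _
      simp [hℓ]
    · intro B hB
      simp only [Finset.mem_filter, Finset.mem_univ, true_and] at hB
      rw [← hform B hB]
  have hcard : (Finset.univ.filter (fun B : V →ₗ[F] W => ∀ x ∈ ker ℓ, B x = 0)).card
      = Fintype.card W := by
    rw [← Finset.card_univ]
    refine Finset.card_nbij' (fun B => B v) (fun w => ℓ.smulRight w)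
      (fun B _ => Finset.mem_univ _) (fun w _ => hmem w) ?_ ?_
    · intro B hB
      simp only [Finset.coe_filter, Finset.coe_univ, Set.mem_univ, Set.mem_setOf_eq, Finset.mem_filter, Finset.mem_univ, true_and] at hB
      exact (hform B hB).symm
    · intro w _
      simp [hℓ]
  have hinner : ∀ X : W →ₗ[F] V, (∑ w : W, φ (ℓ (X w)))
      = if range X ≤ ker ℓ then (Fintype.card W : ℂ) else 0 := by
    intro X
    by_cases h : range X ≤ ker ℓ
    · rw [if_pos h]
      have : ∀ w : W, φ (ℓ (X w)) = 1 := by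
        intro w
        rw [LinearMap.mem_ker.mp (h (LinearMap.mem_range_self X w)), AddChar.map_zero_eq_one]
      simp [this]
    · rw [if_neg h]
      refine sum_addChar_eq_zero φ (ℓ ∘ₗ X).toAddMonoidHom ?_
      obtain ⟨y, hyr, hyk⟩ := SetLike.not_le_iff_exists.mp h
      obtain ⟨w0, rfl⟩ := hyr
      obtain ⟨t, ht⟩ := AddChar.ne_one_iff.mp hφ
      have hne : ℓ (X w0) ≠ 0 := fun h0 => hyk (LinearMap.mem_ker.mpr h0)
      refine ⟨(t / ℓ (X w0)) • w0, ?_⟩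
      show φ (ℓ (X ((t / ℓ (X w0)) • w0))) ≠ 1
      rw [map_smul, map_smul, smul_eq_mul, div_mul_cancel₀ _ hne]
      exact ht
  calc eAvg (ker ℓ) f A
      = (∑ w : W, f (A + ℓ.smulRight w)) / (Fintype.card W : ℂ) := by
        rw [eAvg, hsum (fun B => f (A + B)), hcard]
    _ = (∑ w : W, ∑ X : W →ₗ[F] V, (fHat φ f X * uChar φ X A) * φ (ℓ (X w)))
          / (Fintype.card W : ℂ) := by
        congr 1
        refine Finset.sum_congr rfl fun w _ => ?_
        rw [← fourier_inv φ hφ f (A + ℓ.smulRight w)]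
        refine Finset.sum_congr rfl fun X _ => ?_
        rw [mul_assoc]
        congr 1
        rw [uChar, uChar, ← AddChar.map_add_eq_mul]
        congr 1
        rw [LinearMap.comp_add, map_add]
        congr 1
        have hc : X ∘ₗ ℓ.smulRight w = ℓ.smulRight (X w) := by ext x; simp
        rw [hc, trace_smulRight_eq]
    _ = (∑ X : W →ₗ[F] V, (fHat φ f X * uChar φ X A)
          * (if range X ≤ ker ℓ then (Fintype.card W : ℂ) else 0)) / (Fintype.card W : ℂ) := by
        congr 1
        rw [Finset.sum_comm]
        exact Finset.sum_congr rfl fun X _ => by rw [← Finset.mul_sum, hinner X]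
    _ = ∑ X ∈ Finset.univ.filter (fun X : W →ₗ[F] V => range X ≤ ker ℓ),
          fHat φ f X * uChar φ X A := by
        simp only [mul_ite, mul_zero]
        rw [← Finset.sum_filter, Finset.sum_div]
        exact Finset.sum_congr rfl fun X _ => by
          rw [mul_div_assoc, div_self hW, mul_one]

theorem stmt_4 [Fintype (V →ₗ[F] W)] [Fintype (W →ₗ[F] V)] [Fintype (Submodule F V)]
    (φ : AddChar F ℂ) (hφ : φ ≠ 1)
    (v : V) (hv : v ≠ 0) (f : (V →ₗ[F] W) → ℂ) (A : V →ₗ[F] W) :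
    (∑ V' ∈ Finset.univ.filter
          (fun V' : Submodule F V =>
            Module.finrank F V' + 1 = Module.finrank F V ∧ v ∉ V'),
        eAvg V' f A) /
        ((Finset.univ.filter
          (fun V' : Submodule F V =>
            Module.finrank F V' + 1 = Module.finrank F V ∧ v ∉ V')).card : ℂ) =
      ∑ X ∈ Finset.univ.filter (fun X : W →ₗ[F] V => v ∉ LinearMap.range X),
        ((Fintype.card F : ℂ) ^ Module.finrank F (LinearMap.range X))⁻¹ *
          fHat φ f X * uChar φ X A := by
  classical
  set n := Module.finrank F V with hn
  set q := Fintype.card F with hq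
  have hq0 : (q : ℂ) ≠ 0 := Nat.cast_ne_zero.mpr Fintype.card_pos.ne'
  set P : Submodule F V → Prop :=
    fun V' => Module.finrank F V' + 1 = n ∧ v ∉ V' with hP
  set Lv : Finset (V →ₗ[F] F) := Finset.univ.filter (fun ℓ => ℓ v = 1) with hLv
  -- the chooser
  set j : Submodule F V → (V →ₗ[F] F) :=
    fun V' => Classical.epsilon (fun ℓ : V →ₗ[F] F => ℓ v = 1 ∧ ker ℓ = V') with hj
  have hjspec : ∀ V', P V' → (j V') v = 1 ∧ ker (j V') = V' := by
    intro V' hPV'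
    exact Classical.epsilon_spec
      ((exists_unique_functional hv hPV'.1 hPV'.2).exists)
  -- step 1: reindex the V' sum/card by functionals
  have hsum1 : ∑ V' ∈ Finset.univ.filter P, eAvg V' f A
      = ∑ ℓ ∈ Lv, eAvg (ker ℓ) f A := by
    refine Finset.sum_nbij' j ker ?_ ?_ ?_ ?_ ?_
    · intro V' hV'
      simp only [Finset.mem_filter, Finset.mem_univ, true_and] at hV' ⊢
      rw [hLv]; simp only [Finset.mem_filter, Finset.mem_univ, true_and]
      exact (hjspec V' hV').1
    · intro ℓ hℓ
      simp only [hLv, Finset.mem_filter, Finset.mem_univ, true_and] at hℓ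
      simp only [Finset.mem_filter, Finset.mem_univ, true_and]
      exact ker_hyperplane hℓ
    · intro V' hV'
      simp only [Finset.mem_filter, Finset.mem_univ, true_and] at hV'
      exact (hjspec V' hV').2
    · intro ℓ hℓ
      simp only [hLv, Finset.mem_filter, Finset.mem_univ, true_and] at hℓ
      obtain ⟨hd, hnv⟩ := ker_hyperplane hℓ
      have hu := exists_unique_functional hv hd hnv
      have h1 := hjspec (ker ℓ) ⟨hd, hnv⟩
      exact hu.unique ⟨h1.1, h1.2⟩ ⟨hℓ, rfl⟩
    · intro V' hV'
      simp only [Finset.mem_filter, Finset.mem_univ, true_and] at hV'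
      rw [(hjspec V' hV').2]
  have hcard1 : (Finset.univ.filter P).card = Lv.card := by
    refine Finset.card_nbij' j ker ?_ ?_ ?_ ?_
    · intro V' hV'
      simp only [Finset.coe_filter, Finset.coe_univ, Set.mem_univ, Set.mem_setOf_eq, Finset.mem_filter, Finset.mem_univ, true_and] at hV' ⊢
      rw [hLv]; simp only [Finset.coe_filter, Finset.coe_univ, Set.mem_univ, Set.mem_setOf_eq, Finset.mem_filter, Finset.mem_univ, true_and]
      exact (hjspec V' hV').1
    · intro ℓ hℓ
      simp only [hLv, Finset.coe_filter, Finset.coe_univ, Set.mem_univ, Set.mem_setOf_eq, Finset.mem_filter, Finset.mem_univ, true_and] at hℓ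
      simp only [Finset.coe_filter, Finset.coe_univ, Set.mem_univ, Set.mem_setOf_eq, Finset.mem_filter, Finset.mem_univ, true_and]
      exact ker_hyperplane hℓ
    · intro V' hV'
      simp only [Finset.coe_filter, Finset.coe_univ, Set.mem_univ, Set.mem_setOf_eq, Finset.mem_filter, Finset.mem_univ, true_and] at hV'
      exact (hjspec V' hV').2
    · intro ℓ hℓ
      simp only [hLv, Finset.coe_filter, Finset.coe_univ, Set.mem_univ, Set.mem_setOf_eq, Finset.mem_filter, Finset.mem_univ, true_and] at hℓ
      obtain ⟨hd, hnv⟩ := ker_hyperplane hℓ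
      have hu := exists_unique_functional hv hd hnv
      have h1 := hjspec (ker ℓ) ⟨hd, hnv⟩
      exact hu.unique ⟨h1.1, h1.2⟩ ⟨hℓ, rfl⟩
  -- counts
  have hLvcard : Lv.card = q ^ (n - 1) := by
    have h := counting v hv (⊥ : Submodule F V) (by simpa using hv)
    rw [finrank_bot] at h
    rw [hLv]
    rw [show (Finset.univ.filter fun ℓ : V →ₗ[F] F => ℓ v = 1)
        = Finset.univ.filter (fun ℓ : V →ₗ[F] F => ℓ v = 1 ∧ (⊥ : Submodule F V) ≤ ker ℓ) from
      Finset.filter_congr fun ℓ _ => by simp]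
    rw [h]
    simp [hq, hn]
  have key : ∀ X : W →ₗ[F] V,
      (Lv.filter (fun ℓ => range X ≤ ker ℓ)).card
        = if v ∉ range X then q ^ (n - 1 - Module.finrank F (range X)) else 0 := by
    intro X
    rw [hLv, Finset.filter_filter]
    by_cases h : v ∈ range X
    · rw [if_neg (by simpa using h)]
      rw [Finset.card_eq_zero, Finset.filter_eq_empty_iff]
      rintro ℓ - ⟨h1, h2⟩
      have : ℓ v = 0 := LinearMap.mem_ker.mp (h2 h)
      rw [h1] at this
      exact one_ne_zero this
    · rw [if_pos h]
      exact counting v hv (range X) h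
  -- step 2: expand each eAvg
  rw [hsum1, hcard1]
  have hexp : ∑ ℓ ∈ Lv, eAvg (ker ℓ) f A
      = ∑ ℓ ∈ Lv, ∑ X ∈ Finset.univ.filter (fun X : W →ₗ[F] V => range X ≤ ker ℓ),
          fHat φ f X * uChar φ X A := by
    refine Finset.sum_congr rfl fun ℓ hℓ => ?_
    have hℓv : ℓ v = 1 := by
      simp only [hLv, Finset.mem_filter, Finset.mem_univ, true_and] at hℓ
      exact hℓ
    exact eAvg_ker_eq φ hφ f A hℓv
  rw [hexp]
  -- step 3: swap
  have hswap : ∑ ℓ ∈ Lv, ∑ X ∈ Finset.univ.filter (fun X : W →ₗ[F] V => range X ≤ ker ℓ),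
        fHat φ f X * uChar φ X A
      = ∑ X : W →ₗ[F] V,
          ((Lv.filter (fun ℓ => range X ≤ ker ℓ)).card : ℂ) * (fHat φ f X * uChar φ X A) := by
    rw [Finset.sum_congr rfl fun ℓ _ => Finset.sum_filter _ _]
    rw [Finset.sum_comm]
    refine Finset.sum_congr rfl fun X _ => ?_
    rw [← Finset.sum_filter, Finset.sum_const, nsmul_eq_mul]
  rw [hswap, hLvcard, Finset.sum_div]
  rw [Finset.sum_filter]
  refine Finset.sum_congr rfl fun X _ => ?_
  rw [key X]
  by_cases h : v ∉ range X
  · rw [if_pos h, if_pos h]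
    have hr : Module.finrank F (range X) < n := by
      apply Submodule.finrank_lt
      intro htop; rw [htop] at h; exact h trivial
    have hsplit : (q : ℂ) ^ (n - 1)
        = (q : ℂ) ^ Module.finrank F (range X) * (q : ℂ) ^ (n - 1 - Module.finrank F (range X)) := by
      rw [← pow_add]
      congr 1
      omega
    push_cast
    rw [hsplit]
    field_simp
  · rw [if_neg h, if_neg h]
    simp
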